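/- Let G be a group, q an element of G, and l a list of elements of G. Suppose each position of l is marked either 'kept' or 'deleted', and assume that every deleted element of l commutes with q and commutes with every kept element occurring at an earlier position of l. Let l' be the sublist of kept elements of l (in order). Writing w(m) for the product of a list m of group elements taken with the last element of m as the leftmost factor (i.e., w(m) = (reverse of m).prod), we have w(l) * q * w(l)⁻¹ = w(l') * q * w(l')⁻¹. -/

import Mathlib

private lemma aux_stmt_6 {G : Type*} [Group G] : ∀ (l : List (G × Bool)) (q : G),
    (∀ x ∈ l, x.2 = false → Commute x.1 q) →
    (l.Pairwise (fun x y => x.2 = true → y.2 = false → Commute y.1 x.1)) →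
    (l.map Prod.fst).reverse.prod * q * ((l.map Prod.fst).reverse.prod)⁻¹ =
      ((l.filter (fun x => x.2)).map Prod.fst).reverse.prod * q *
        (((l.filter (fun x => x.2)).map Prod.fst).reverse.prod)⁻¹ := by
  intro l
  induction l with
  | nil => intro q _ _; simp
  | cons a t ih =>
    intro q h1 h2
    rw [List.pairwise_cons] at h2
    have key : ∀ (m : List (G × Bool)) (r : G),
        ((a :: m).map Prod.fst).reverse.prod * r * (((a :: m).map Prod.fst).reverse.prod)⁻¹
        = (m.map Prod.fst).reverse.prod * (a.1 * r * a.1⁻¹) * ((m.map Prod.fst).reverse.prod)⁻¹ := by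
      intro m r
      simp [mul_inv_rev, mul_assoc]
    rcases hb : a.2 with _ | _
    · -- deleted
      have hq : a.1 * q * a.1⁻¹ = q := by
        have := (h1 a List.mem_cons_self hb)
        rw [this.eq, mul_assoc, mul_inv_cancel, mul_one]
      rw [key, hq]
      have hf : (a :: t).filter (fun x => x.2) = t.filter (fun x => x.2) := by
        simp [List.filter_cons, hb]
      rw [hf]
      exact ih q (fun x hx => h1 x (List.mem_cons_of_mem _ hx)) h2.2
    · -- kept
      have hf : (a :: t).filter (fun x => x.2) = a :: t.filter (fun x => x.2) := by
        simp [List.filter_cons, hb]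
      rw [key, hf, key]
      refine ih (a.1 * q * a.1⁻¹) ?_ ?_
      · intro x hx hxf
        have hxq := h1 x (List.mem_cons_of_mem _ hx) hxf
        have hxa : Commute x.1 a.1 := h2.1 x hx hb hxf
        exact (hxa.mul_right hxq).mul_right hxa.inv_right
      · exact h2.2

theorem stmt_6 {G : Type*} [Group G] (q : G) (l : List (G × Bool))
    (hcomm : ∀ j : Fin l.length, (l.get j).2 = false →
      Commute (l.get j).1 q ∧
      ∀ i : Fin l.length, (i : ℕ) < (j : ℕ) → (l.get i).2 = true →
        Commute (l.get j).1 (l.get i).1) :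
    (l.map Prod.fst).reverse.prod * q * ((l.map Prod.fst).reverse.prod)⁻¹ =
      ((l.filter (fun x => x.2)).map Prod.fst).reverse.prod * q *
        (((l.filter (fun x => x.2)).map Prod.fst).reverse.prod)⁻¹ := by
  apply aux_stmt_6
  · intro x hx hxf
    obtain ⟨j, hj⟩ := List.mem_iff_get.mp hx
    exact hj ▸ (hcomm j (hj ▸ hxf)).1
  · rw [List.pairwise_iff_get]
    intro i j hij hit hjf
    exact (hcomm j hjf).2 i hij hit
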